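/- Let (R, m, k) be a Noetherian local ring with depth R = 0 and let M be a finitely generated R-module. If L is a non-zero R-module that is a homomorphic image of a finite direct sum of syzygy modules ⨁_{n∈Λ} (Ω_n^R(M))^{j_n}, where Λ is a finite set of integers n ≥ 1 and the j_n are positive integers, then L is not a semidualizing R-module. -/

import Mathlib

/- Background definitions: Ext/Tor vanishing, semidualizing modules, finite injective
dimension, depth, Cohen–Macaulay local rings, maximal Cohen–Macaulay modules, minimal
syzygies, length, Hilbert–Samuel function, minimal multiplicity, and regular/Gorenstein
local rings. -/

open CategoryTheory IsLocalRing TensorProduct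

noncomputable section

/-- Vanishing of `Ext_R^i(M, N)`. -/
def ExtVanishes (R : Type) [CommRing R] (M N : ModuleCat.{0} R) (i : ℕ) : Prop :=
  Subsingleton (((Ext R (ModuleCat R) i).obj (Opposite.op M)).obj N)

/-- Vanishing of `Tor_i^R(M, N)`. -/
def TorVanishes (R : Type) [CommRing R] (M N : ModuleCat.{0} R) (i : ℕ) : Prop :=
  Subsingleton (((Tor (ModuleCat R) i).obj M).obj N)

/-- `C` is a semidualizing `R`-module: `C` is finitely generated, the natural map
`R → Hom_R(C, C)`, `r ↦ r • ·`, is bijective, and `Ext_R^i(C, C) = 0` for all `i ≥ 1`. -/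
def IsSemidualizing (R : Type) [CommRing R] (C : Type) [AddCommGroup C] [Module R C] : Prop :=
  Module.Finite R C ∧ Function.Bijective (LinearMap.lsmul R C) ∧
    ∀ i : ℕ, 1 ≤ i → ExtVanishes R (ModuleCat.of R C) (ModuleCat.of R C) i

/-- `M` has finite injective dimension: there is an `n` such that `Ext_R^i(N, M) = 0`
for all `i > n` and all modules `N`. -/
def HasFiniteInjDim (R : Type) [CommRing R] (M : Type) [AddCommGroup M] [Module R M] : Prop :=
  ∃ n : ℕ, ∀ (N : ModuleCat.{0} R) (i : ℕ), n < i → ExtVanishes R N (ModuleCat.of R M) i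

/-- The depth of a module over a local ring: the supremum of the lengths of `M`-regular
sequences contained in the maximal ideal. -/
def moduleDepth (R : Type) [CommRing R] [IsLocalRing R]
    (M : Type) [AddCommGroup M] [Module R M] : ℕ∞ :=
  sSup {n : ℕ∞ | ∃ rs : List R, (rs.length : ℕ∞) = n ∧ (∀ r ∈ rs, r ∈ maximalIdeal R) ∧
    RingTheory.Sequence.IsRegular M rs}

/-- A Noetherian local ring is Cohen–Macaulay if its depth equals its Krull dimension. -/
def IsCohenMacaulayLocalRing (R : Type) [CommRing R] [IsLocalRing R] : Prop :=
  IsNoetherianRing R ∧ (moduleDepth R R : WithBot ℕ∞) = ringKrullDim R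

/-- A module over a local ring is maximal Cohen–Macaulay if its depth equals the Krull
dimension of the ring. -/
def IsMaximalCohenMacaulay (R : Type) [CommRing R] [IsLocalRing R]
    (M : Type) [AddCommGroup M] [Module R M] : Prop :=
  (moduleDepth R M : WithBot ℕ∞) = ringKrullDim R

/-- `S` is an `n`-th syzygy of `M` in a minimal free resolution: `Ω_0(M) = M`, and
`Ω_{n+1}(M) = Ω_n(ker f)` for a minimal free cover `f : F → M` (i.e. `F` finite free,
`f` surjective, and `ker f ⊆ m F`, which characterizes the covers occurring in a minimal
free resolution). -/
def IsMinimalSyzygy (R : Type) [CommRing R] [IsLocalRing R] :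
    ℕ → ModuleCat.{0} R → ModuleCat.{0} R → Prop
  | 0, M, S => Nonempty (S ≃ₗ[R] M)
  | n + 1, M, S =>
      ∃ (F : ModuleCat.{0} R) (f : F ⟶ M), Module.Free R F ∧ Module.Finite R F ∧
        Function.Surjective f ∧
        LinearMap.ker f.hom ≤ (maximalIdeal R) • (⊤ : Submodule R F) ∧
        IsMinimalSyzygy R n (ModuleCat.of R (LinearMap.ker f.hom)) S

/-- `L` is a homomorphic image of a finite direct sum of syzygy modules `Ω_n^R(M)`,
where all occurring indices `n` satisfy `lo ≤ n` (multiplicities are accounted for by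
repetitions in the finite index type). -/
def IsQuotOfSyzygies (R : Type) [CommRing R] [IsLocalRing R]
    (M : Type) [AddCommGroup M] [Module R M]
    (L : Type) [AddCommGroup L] [Module R L] (lo : ℕ) : Prop :=
  ∃ (ι : Type) (_ : Fintype ι) (n : ι → ℕ) (S : ι → ModuleCat.{0} R),
    (∀ i, lo ≤ n i) ∧
    (∀ i, IsMinimalSyzygy R (n i) (ModuleCat.of R M) (S i)) ∧
    ∃ g : (DirectSum ι fun i => S i) →ₗ[R] L, Function.Surjective g

/-- The minimal number of generators `μ(I)` of an ideal. -/
def minGens (R : Type) [CommRing R] (I : Ideal R) : ℕ :=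
  sInf {n : ℕ | ∃ s : Finset R, s.card = n ∧ Ideal.span (s : Set R) = I}

/-- The length of a module, i.e. the Krull dimension of its lattice of submodules. -/
def moduleLength (R : Type) [CommRing R] (M : Type) [AddCommGroup M] [Module R M] : ℕ :=
  (WithBot.unbotD 0 (Order.krullDim (Submodule R M))).toNat

/-- The Hilbert–Samuel function of a local ring: `n ↦ λ_R(R / m^{n+1})`. -/
def hilbertSamuel (R : Type) [CommRing R] [IsLocalRing R] (n : ℕ) : ℕ :=
  moduleLength R (R ⧸ (maximalIdeal R ^ (n + 1)))

/-- A `d`-dimensional Cohen–Macaulay local ring has minimal multiplicity if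
`e(R) = μ(m) - d + 1`, where the Hilbert–Samuel multiplicity `e(R)` is `d!` times the
degree-`d` coefficient of the Hilbert–Samuel polynomial of `R`. -/
def HasMinimalMultiplicity (R : Type) [CommRing R] [IsLocalRing R] (d : ℕ) : Prop :=
  ∃ P : Polynomial ℚ,
    (∀ᶠ n : ℕ in Filter.atTop, (hilbertSamuel R n : ℚ) = P.eval (n : ℚ)) ∧
    (d.factorial : ℚ) * P.coeff d = (minGens R (maximalIdeal R) : ℚ) - d + 1

/-- A Noetherian local ring is regular if its maximal ideal can be generated by
`dim R` elements. -/
def IsRegularLocalRing' (R : Type) [CommRing R] [IsLocalRing R] : Prop :=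
  IsNoetherianRing R ∧ (minGens R (maximalIdeal R) : WithBot ℕ∞) = ringKrullDim R

/-- A local ring is Gorenstein if it has finite injective dimension as a module over
itself. -/
def IsGorensteinLocalRing (R : Type) [CommRing R] [IsLocalRing R] : Prop :=
  HasFiniteInjDim R R

/-- `ω` is a canonical module of the `d`-dimensional Cohen–Macaulay local ring `R`:
`ω` is finitely generated and `dim_k Ext_R^i(k, ω) = δ_{i,d}`, i.e. `Ext_R^i(k, ω) = 0`
for `i ≠ d` and `Ext_R^d(k, ω) ≅ k`. -/
def IsCanonicalModule (R : Type) [CommRing R] [IsLocalRing R] (d : ℕ)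
    (ω : Type) [AddCommGroup ω] [Module R ω] : Prop :=
  Module.Finite R ω ∧
    (∀ i : ℕ, i ≠ d →
      ExtVanishes R (ModuleCat.of R (ResidueField R)) (ModuleCat.of R ω) i) ∧
    Nonempty ((((Ext R (ModuleCat R) d).obj
        (Opposite.op (ModuleCat.of R (ResidueField R)))).obj (ModuleCat.of R ω))
        ≃ₗ[R] ResidueField R)

/-- `M` has Gorenstein dimension zero: the natural map `M → M**` is bijective and
`Ext_R^i(M, R) = 0 = Ext_R^i(M*, R)` for all `i ≥ 1`. -/
def IsGdimZero (R : Type) [CommRing R] (M : Type) [AddCommGroup M] [Module R M] : Prop :=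
  Function.Bijective (Module.Dual.eval R M) ∧
    ∀ i : ℕ, 1 ≤ i →
      ExtVanishes R (ModuleCat.of R M) (ModuleCat.of R R) i ∧
      ExtVanishes R (ModuleCat.of R (Module.Dual R M)) (ModuleCat.of R R) i

end

private lemma depth_zero_zerodivisor (R : Type) [CommRing R] [IsLocalRing R]
    (hdepth : moduleDepth R R = 0) {a : R} (ha : a ∈ maximalIdeal R) :
    ∃ z : R, z ≠ 0 ∧ a * z = 0 := by
  by_contra h
  push_neg at h
  have hreg : IsSMulRegular R a := by
    intro z w hzw
    by_contra hne
    refine h (z - w) (sub_ne_zero.mpr hne) ?_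
    have : a * z = a * w := hzw
    rw [mul_sub, this, sub_self]
  have hne : (Ideal.ofList [a] : Ideal R) ≠ ⊤ := by
    rw [Ideal.ofList_singleton]
    intro htop
    exact mem_nonunits_iff.mp (IsLocalRing.mem_maximalIdeal a |>.mp ha)
      (Ideal.span_singleton_eq_top.mp htop)
  have hregseq : RingTheory.Sequence.IsRegular R [a] := by
    refine ⟨(RingTheory.Sequence.isWeaklyRegular_singleton_iff R a).mpr hreg, ?_⟩
    intro htop
    have hle : (Ideal.ofList [a] • ⊤ : Submodule R R) ≤ Ideal.ofList [a] :=
      Submodule.smul_le.mpr (fun r hr x _ => by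
        simpa [smul_eq_mul] using Ideal.mul_mem_right x _ hr)
    have h1 : (1 : R) ∈ (Ideal.ofList [a] • ⊤ : Submodule R R) :=
      htop ▸ Submodule.mem_top
    exact hne (Ideal.eq_top_iff_one _ |>.mpr (hle h1))
  have h1le : (1 : ℕ∞) ≤ moduleDepth R R := by
    apply le_sSup
    exact ⟨[a], by simp, by simpa using ha, hregseq⟩
  rw [hdepth] at h1le
  simp at h1le

private lemma socle_ne_zero (R : Type) [CommRing R] [IsLocalRing R] [IsNoetherianRing R]
    (h : ∀ a ∈ maximalIdeal R, ∃ z : R, z ≠ 0 ∧ a * z = 0) :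
    ∃ x : R, x ≠ 0 ∧ ∀ a ∈ maximalIdeal R, x * a = 0 := by
  classical
  obtain ⟨s, hs_inf, hs_pri⟩ := Submodule.isLasker R R ⊥
  obtain ⟨t, hts, ht_inf, ht_min⟩ := Ideal.decomposition_erase_inf hs_inf
  have ht_pri : ∀ J ∈ t, J.IsPrimary := fun J hJ => hs_pri (hts hJ)
  have hcover : ((maximalIdeal R : Ideal R) : Set R) ⊆
      ⋃ J ∈ (↑t : Set (Ideal R)), ((Ideal.radical J : Ideal R) : Set R) := by
    intro a ha
    obtain ⟨z, hz0, hz⟩ := h a ha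
    have hex : ∃ J ∈ t, z ∉ J := by
      by_contra hc
      push_neg at hc
      have hz' : z ∈ t.inf id := Submodule.mem_finsetInf.mpr fun J hJ => hc J hJ
      rw [ht_inf] at hz'
      exact hz0 hz'
    obtain ⟨J, hJt, hzJ⟩ := hex
    have hmul : z * a ∈ J := by
      rw [mul_comm, hz]; exact J.zero_mem
    rcases (Ideal.isPrimary_iff.mp (ht_pri J hJt)).2 hmul with h1 | h2
    · exact absurd h1 hzJ
    · exact Set.mem_biUnion hJt h2
  obtain ⟨J, hJt, hmle⟩ :=
    (Ideal.subset_union_prime (f := Ideal.radical) ⊥ ⊥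
      (fun J hJ _ _ => Ideal.isPrime_radical (ht_pri J hJ))).mp hcover
  have hprime := Ideal.isPrime_radical (ht_pri J hJt)
  have hradm : J.radical = maximalIdeal R :=
    le_antisymm (IsLocalRing.le_maximalIdeal hprime.ne_top) hmle
  obtain ⟨n, hn⟩ := Ideal.exists_pow_le_of_le_radical_of_fg
    (le_of_eq hradm.symm) (IsNoetherian.noetherian (maximalIdeal R))
  obtain ⟨y, hyK, hyJ⟩ := SetLike.not_le_iff_exists.mp (ht_min hJt)
  have hy0 : y ≠ 0 := fun h0 => hyJ (h0 ▸ J.zero_mem)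
  have key : ∀ c ∈ (maximalIdeal R) ^ n, c * y = 0 := by
    intro c hc
    have hcy : c * y ∈ t.inf id := by
      refine Submodule.mem_finsetInf.mpr ?_
      intro J' hJ'
      by_cases hJJ : J' = J
      · subst hJJ
        exact Ideal.mul_mem_right y J' (hn hc)
      · have hle : (t.erase J).inf id ≤ id J' :=
          Finset.inf_le (Finset.mem_erase.mpr ⟨hJJ, hJ'⟩)
        have hyJ' : y ∈ J' := hle hyK
        exact Ideal.mul_mem_left J' c hyJ'
    rw [ht_inf] at hcy
    exact hcy
  have hQ : ∃ m : ℕ, ∀ c ∈ (maximalIdeal R) ^ m, c * y = 0 := ⟨n, key⟩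
  have hp := Nat.find_spec hQ
  have hp0 : Nat.find hQ ≠ 0 := by
    intro h0
    have h1 : (1 : R) ∈ (maximalIdeal R) ^ (Nat.find hQ) := by
      rw [h0, pow_zero, Ideal.one_eq_top]; exact Submodule.mem_top
    have := hp 1 h1
    rw [one_mul] at this
    exact hy0 this
  have hlt : Nat.find hQ - 1 < Nat.find hQ :=
    Nat.sub_lt (Nat.pos_of_ne_zero hp0) one_pos
  have hnot := Nat.find_min hQ hlt
  push_neg at hnot
  obtain ⟨c, hc, hcy⟩ := hnot
  refine ⟨c * y, hcy, ?_⟩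
  intro a ha
  have hca : c * a ∈ (maximalIdeal R) ^ (Nat.find hQ) := by
    have heq : Nat.find hQ = (Nat.find hQ - 1) + 1 :=
      (Nat.succ_pred_eq_of_pos (Nat.pos_of_ne_zero hp0)).symm
    rw [heq, pow_succ]
    exact Ideal.mul_mem_mul hc ha
  have h0 := hp (c * a) hca
  calc c * y * a = c * a * y := by ring
  _ = 0 := h0

private lemma syzygy_ann (R : Type) [CommRing R] [IsLocalRing R]
    {x : R} (hx : ∀ a ∈ maximalIdeal R, x * a = 0) :
    ∀ (n : ℕ) (M S : ModuleCat.{0} R), IsMinimalSyzygy R (n + 1) M S → ∀ s : S, x • s = 0 := by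
  intro n
  induction n with
  | zero =>
    intro M S hS s
    obtain ⟨F, f, _, _, _, hker, hiso⟩ := hS
    obtain ⟨e⟩ := hiso
    set z : LinearMap.ker f.hom := e s with hz
    have hmem : (z : F) ∈ (maximalIdeal R) • (⊤ : Submodule R F) := hker z.2
    have hxF : x • (z : F) = 0 := by
      refine Submodule.smul_induction_on hmem ?_ ?_
      · intro a ha v _
        rw [smul_smul, hx a ha, zero_smul]
      · intro u v hu hv
        rw [smul_add, hu, hv, add_zero]
    have hes : x • z = 0 := by
      apply Subtype.ext
      simpa using hxF
    apply e.injective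
    rw [map_smul, map_zero]
    exact hes
  | succ n ih =>
    intro M S hS s
    obtain ⟨F, f, _, _, _, _, hS'⟩ := hS
    exact ih _ _ hS' s

/-- Over a Noetherian local ring of depth zero, a non-zero homomorphic
image of a finite direct sum of syzygy modules `Ω_n^R(M)` (`n ≥ 1`) of a finitely
generated module `M` is never a semidualizing module. -/
theorem stmt_3 (R : Type) [CommRing R] [IsLocalRing R] [IsNoetherianRing R]
    (hdepth : moduleDepth R R = 0)
    (M : Type) [AddCommGroup M] [Module R M] [Module.Finite R M]
    (L : Type) [AddCommGroup L] [Module R L] [Module.Finite R L]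
    (hL0 : Nontrivial L)
    (hquot : IsQuotOfSyzygies R M L 1) :
    ¬ IsSemidualizing R L := by
  rintro ⟨hfin, hbij, -⟩
  have hzd : ∀ a ∈ maximalIdeal R, ∃ z : R, z ≠ 0 ∧ a * z = 0 :=
    fun a ha => depth_zero_zerodivisor R hdepth ha
  obtain ⟨x, hx0, hx⟩ := socle_ne_zero R hzd
  obtain ⟨ι, hfint, n, S, hn, hsyz, g, hg⟩ := hquot
  have hxL : ∀ l : L, x • l = 0 := by
    intro l
    obtain ⟨d, rfl⟩ := hg l
    have hd : x • d = 0 := by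
      refine DFinsupp.ext fun i => ?_
      rw [DFinsupp.smul_apply, DFinsupp.zero_apply]
      have hsi : IsMinimalSyzygy R ((n i - 1) + 1) (ModuleCat.of R M) (S i) := by
        rw [Nat.sub_add_cancel (hn i)]
        exact hsyz i
      have := syzygy_ann R hx (n i - 1) (ModuleCat.of R M) (S i) hsi (d i)
      exact this
    rw [← map_smul, hd, map_zero]
  apply hx0
  apply hbij.injective
  ext l
  simp [hxL l]
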